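/- Let Γ(R) be the zero-divisor graph of R = 𝔽_p[x]/(x^{2b+1}) with b ≥ 1. The clique number of Γ(R) equals p^b. -/

import Mathlib

open Polynomial

noncomputable section

/-- The truncated polynomial ring `𝔽_p[x]/(x^c)`. -/
abbrev TPR (p c : ℕ) : Type := AdjoinRoot (X ^ c : (ZMod p)[X])

instance (p c : ℕ) [Fact p.Prime] : Finite (TPR p c) := by
  have hb : PowerBasis (ZMod p) (TPR p c) :=
    AdjoinRoot.powerBasis (pow_ne_zero c Polynomial.X_ne_zero)
  have : Module.Finite (ZMod p) (TPR p c) := Module.Finite.of_basis hb.basis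
  exact Module.finite_of_finite (ZMod p)

/-- The canonical representative (the unique representative of degree `< c`)
of an element of `𝔽_p[x]/(x^c)`. -/
def canon {p c : ℕ} (f : TPR p c) : (ZMod p)[X] :=
  Function.surjInv (AdjoinRoot.mk_surjective (g := (X ^ c : (ZMod p)[X]))) f %ₘ X ^ c

/-- The minimal degree: the least exponent with nonzero coefficient in the
canonical representative. -/
def mindeg {p c : ℕ} (f : TPR p c) : ℕ := (canon f).natTrailingDegree

/-- The set of nonzero zero-divisors of `𝔽_p[x]/(x^c)`. -/
def zd (p c : ℕ) : Set (TPR p c) := {f | f ≠ 0 ∧ ∃ g, g ≠ 0 ∧ f * g = 0}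

/-- The zero-divisor graph of `𝔽_p[x]/(x^c)`: vertices are the nonzero
zero-divisors, and `f ~ g` iff `f ≠ g` and `f * g = 0`. -/
def zdGraph (p c : ℕ) : SimpleGraph (zd p c) where
  Adj a b := a ≠ b ∧ (a : TPR p c) * (b : TPR p c) = 0
  symm := ⟨fun a b h => ⟨h.1.symm, by rw [mul_comm]; exact h.2⟩⟩
  loopless := ⟨fun a h => h.1 rfl⟩

/-! ### Auxiliary lemmas -/

section Aux

variable {p c : ℕ} [Fact p.Prime]

lemma mk_mod (q : (ZMod p)[X]) :
    AdjoinRoot.mk (X ^ c) (q %ₘ X ^ c) = AdjoinRoot.mk (X ^ c) q := by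
  conv_rhs => rw [← Polynomial.modByMonic_add_div q (X ^ c)]
  rw [map_add, map_mul, AdjoinRoot.mk_self, zero_mul, add_zero]

lemma mk_canon (f : TPR p c) : AdjoinRoot.mk (X ^ c) (canon f) = f := by
  unfold canon
  rw [mk_mod]
  exact Function.surjInv_eq _ f

lemma degree_canon (f : TPR p c) : (canon f).degree < c := by
  have := Polynomial.degree_modByMonic_lt
    (Function.surjInv (AdjoinRoot.mk_surjective (g := (X ^ c : (ZMod p)[X]))) f)
    (monic_X_pow (R := ZMod p) c)
  rwa [degree_X_pow] at this

lemma mk_inj {q₁ q₂ : (ZMod p)[X]} (h₁ : q₁.degree < c) (h₂ : q₂.degree < c)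
    (h : AdjoinRoot.mk (X ^ c) q₁ = AdjoinRoot.mk (X ^ c) q₂) : q₁ = q₂ := by
  have hd : X ^ c ∣ q₁ - q₂ := by
    rw [← AdjoinRoot.mk_eq_zero, map_sub, h, sub_self]
  have h0 := Polynomial.eq_zero_of_dvd_of_degree_lt hd (by
    rw [degree_X_pow]; exact lt_of_le_of_lt (degree_sub_le _ _) (max_lt h₁ h₂))
  exact sub_eq_zero.mp h0

lemma canon_mk {q : (ZMod p)[X]} (hq : q.degree < c) :
    canon (AdjoinRoot.mk (X ^ c) q) = q :=
  mk_inj (degree_canon _) hq (by rw [mk_canon])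

lemma canon_eq_zero_iff {f : TPR p c} : canon f = 0 ↔ f = 0 := by
  constructor
  · intro h; rw [← mk_canon f, h, map_zero]
  · rintro rfl
    rw [← map_zero (AdjoinRoot.mk (X ^ c : (ZMod p)[X])), canon_mk]
    simpa using WithBot.bot_lt_iff_ne_bot.2 (by simp)

lemma X_pow_dvd_iff_le_natTrailingDegree {q : (ZMod p)[X]} (hq : q ≠ 0) (n : ℕ) :
    X ^ n ∣ q ↔ n ≤ q.natTrailingDegree := by
  constructor
  · intro h
    exact Polynomial.le_natTrailingDegree hq (fun m hm => Polynomial.X_pow_dvd_iff.1 h m hm)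
  · intro h
    exact Polynomial.X_pow_dvd_iff.2 fun d hd =>
      Polynomial.coeff_eq_zero_of_lt_natTrailingDegree (lt_of_lt_of_le hd h)

lemma mul_eq_zero_iff_c_le {f g : TPR p c} (hf : f ≠ 0) (hg : g ≠ 0) :
    f * g = 0 ↔ c ≤ mindeg f + mindeg g := by
  have hcf : canon f ≠ 0 := fun h => hf (canon_eq_zero_iff.1 h)
  have hcg : canon g ≠ 0 := fun h => hg (canon_eq_zero_iff.1 h)
  have hfg : f * g = AdjoinRoot.mk (X ^ c) (canon f * canon g) := by
    rw [map_mul, mk_canon, mk_canon]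
  rw [hfg, AdjoinRoot.mk_eq_zero,
    X_pow_dvd_iff_le_natTrailingDegree (mul_ne_zero hcf hcg),
    Polynomial.natTrailingDegree_mul hcf hcg]
  rfl

end Aux

section CliqueSide

variable {p b : ℕ} [Fact p.Prime]

/-- Polynomials of degree `< b`, the parameter space for the maximum clique. -/
abbrev D (p b : ℕ) := Polynomial.degreeLT (ZMod p) b

instance : Fintype (D p b) := Fintype.ofEquiv _ (Polynomial.degreeLTEquiv (ZMod p) b).toEquiv.symm

lemma card_D : Fintype.card (D p b) = p ^ b := by
  rw [Fintype.card_congr (Polynomial.degreeLTEquiv (ZMod p) b).toEquiv]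
  simp [ZMod.card]

/-- The underlying polynomial of a clique element. -/
def u (b : ℕ) (r : (ZMod p)[X]) : (ZMod p)[X] :=
  if r = 0 then X ^ b else X ^ (b + 1) * r

lemma degree_u {r : (ZMod p)[X]} (hr : r.degree < b) : (u b r).degree < (2 * b + 1 : ℕ) := by
  unfold u
  split_ifs with h
  · rw [degree_X_pow]
    exact_mod_cast by omega
  · have h1 : r.natDegree < b := (Polynomial.natDegree_lt_iff_degree_lt h).2 hr
    rw [← Polynomial.natDegree_lt_iff_degree_lt (mul_ne_zero (pow_ne_zero _ X_ne_zero) h)]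
    rw [Polynomial.natDegree_mul (pow_ne_zero _ X_ne_zero) h, natDegree_X_pow]
    omega

lemma u_ne_zero_dvd {r : (ZMod p)[X]} (hr : r.degree < b) :
    ¬ (X : (ZMod p)[X]) ^ (2 * b + 1) ∣ u b r := by
  intro h
  have hu0 : u b r ≠ 0 := by
    unfold u; split_ifs with h0
    · exact pow_ne_zero _ X_ne_zero
    · exact mul_ne_zero (pow_ne_zero _ X_ne_zero) h0
  have := Polynomial.eq_zero_of_dvd_of_degree_lt h (by
    rw [degree_X_pow]; exact degree_u hr)
  exact hu0 this

lemma u_inj {r s : (ZMod p)[X]} (h : u b r = u b s) : r = s := by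
  unfold u at h
  split_ifs at h with h1 h2 h2
  · rw [h1, h2]
  · exfalso
    have := congrArg (fun q => Polynomial.coeff q b) h
    simp only [coeff_X_pow, if_pos rfl] at this
    have hc : (X ^ (b + 1) * s).coeff b = 0 :=
      Polynomial.X_pow_dvd_iff.1 (dvd_mul_right _ _) b (by omega)
    rw [hc] at this
    exact one_ne_zero this
  · exfalso
    have := congrArg (fun q => Polynomial.coeff q b) h
    simp only [coeff_X_pow, if_pos rfl] at this
    have hc : (X ^ (b + 1) * r).coeff b = 0 :=
      Polynomial.X_pow_dvd_iff.1 (dvd_mul_right _ _) b (by omega)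
    rw [hc] at this
    exact one_ne_zero this.symm
  · exact mul_left_cancel₀ (pow_ne_zero _ X_ne_zero) h

lemma u_mul_u (r s : (ZMod p)[X]) (hne : r = 0 → s = 0 → False) :
    (X : (ZMod p)[X]) ^ (2 * b + 1) ∣ u b r * u b s := by
  unfold u
  split_ifs with h1 h2 h2
  · exact absurd (hne h1 h2) not_false
  · rw [show X ^ b * (X ^ (b+1) * s) = X ^ (2*b+1) * s by ring]
    exact dvd_mul_right _ _
  · rw [show X ^ (b+1) * r * X ^ b = X ^ (2*b+1) * r by ring]
    exact dvd_mul_right _ _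
  · rw [show X ^ (b+1) * r * (X ^ (b+1) * s) = X ^ (2*b+1) * (X * (r * s)) by ring]
    exact dvd_mul_right _ _

lemma u_mul_X2b (hb : 1 ≤ b) (r : (ZMod p)[X]) :
    (X : (ZMod p)[X]) ^ (2 * b + 1) ∣ u b r * X ^ (2 * b) := by
  unfold u
  split_ifs with h1
  · rw [← pow_add]
    exact pow_dvd_pow _ (by omega)
  · rw [show X ^ (b+1) * r * X ^ (2*b) = X ^ (3*b+1) * r by ring]
    exact dvd_mul_of_dvd_left (pow_dvd_pow _ (by omega)) _

lemma e_mem_zd (hb : 1 ≤ b) (r : D p b) :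
    AdjoinRoot.mk (X ^ (2 * b + 1)) (u b (r : (ZMod p)[X])) ∈ zd p (2 * b + 1) := by
  have hr : (r : (ZMod p)[X]).degree < b := Polynomial.mem_degreeLT.1 r.2
  refine ⟨fun h => u_ne_zero_dvd hr (AdjoinRoot.mk_eq_zero.1 h), ?_⟩
  refine ⟨AdjoinRoot.mk (X ^ (2 * b + 1)) (X ^ (2 * b)), ?_, ?_⟩
  · intro h
    have hd := AdjoinRoot.mk_eq_zero.1 h
    have := Polynomial.eq_zero_of_dvd_of_degree_lt hd (by
      rw [degree_X_pow, degree_X_pow]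
      exact_mod_cast by omega)
    exact pow_ne_zero (2 * b) (X_ne_zero (R := ZMod p)) this
  · rw [← map_mul, AdjoinRoot.mk_eq_zero]
    exact u_mul_X2b hb _

/-- The key structure lemma for elements of high minimal degree. -/
lemma high_mindeg_struct {f : TPR p (2 * b + 1)} (hf : f ≠ 0) (hm : b < mindeg f) :
    canon f = X ^ (b + 1) * (canon f /ₘ X ^ (b + 1)) ∧
      (canon f /ₘ X ^ (b + 1)).degree < (b : WithBot ℕ) ∧ canon f /ₘ X ^ (b + 1) ≠ 0 := by
  have hcf : canon f ≠ 0 := fun h => hf (canon_eq_zero_iff.1 h)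
  have hdvd : (X : (ZMod p)[X]) ^ (b + 1) ∣ canon f :=
    (X_pow_dvd_iff_le_natTrailingDegree hcf (b + 1)).2 hm
  have hmod : canon f %ₘ X ^ (b + 1) = 0 :=
    (Polynomial.modByMonic_eq_zero_iff_dvd (monic_X_pow _)).2 hdvd
  have heq : canon f = X ^ (b + 1) * (canon f /ₘ X ^ (b + 1)) := by
    conv_lhs => rw [← Polynomial.modByMonic_add_div (canon f) (X ^ (b + 1))]
    rw [hmod, zero_add]
  have hr0 : canon f /ₘ X ^ (b + 1) ≠ 0 := by
    intro h
    rw [h, mul_zero] at heq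
    exact hcf heq
  refine ⟨heq, ?_, hr0⟩
  have hdc : (canon f).natDegree < 2 * b + 1 :=
    (Polynomial.natDegree_lt_iff_degree_lt hcf).2 (degree_canon f)
  have hnd : (canon f).natDegree = (b + 1) + (canon f /ₘ X ^ (b + 1)).natDegree := by
    conv_lhs => rw [heq]
    rw [Polynomial.natDegree_mul (pow_ne_zero _ X_ne_zero) hr0, natDegree_X_pow]
  rw [← Polynomial.natDegree_lt_iff_degree_lt hr0]
  omega

end CliqueSide

/-- The clique number of the zero-divisor graph of `𝔽_p[x]/(x^(2b+1))` equals `p^b`. -/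
theorem stmt_11 (p b : ℕ) [Fact p.Prime] (hb : 1 ≤ b) :
    (zdGraph p (2 * b + 1)).cliqueNum = p ^ b := by
  classical
  letI : Fintype ↥(zd p (2 * b + 1)) := Fintype.ofFinite _
  -- the injective map from the parameter space into the vertex set
  set ψ : D p b → ↥(zd p (2 * b + 1)) :=
    fun r => ⟨AdjoinRoot.mk (X ^ (2 * b + 1)) (u b (r : (ZMod p)[X])), e_mem_zd hb r⟩ with hψ
  have hψinj : Function.Injective ψ := by
    intro r s h
    have h1 : AdjoinRoot.mk (X ^ (2 * b + 1)) (u b (r : (ZMod p)[X])) =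
        AdjoinRoot.mk (X ^ (2 * b + 1)) (u b (s : (ZMod p)[X])) := by
      simpa [hψ, Subtype.ext_iff] using h
    have h2 : u b (r : (ZMod p)[X]) = u b (s : (ZMod p)[X]) :=
      mk_inj (degree_u (Polynomial.mem_degreeLT.1 r.2))
        (degree_u (Polynomial.mem_degreeLT.1 s.2)) h1
    exact Subtype.ext (u_inj h2)
  set K : Finset ↥(zd p (2 * b + 1)) := Finset.univ.image ψ with hK
  have hKcard : K.card = p ^ b := by
    rw [hK, Finset.card_image_of_injective _ hψinj, Finset.card_univ, card_D]
  have hKclique : (zdGraph p (2 * b + 1)).IsClique K := by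
    intro a ha a' ha' hne
    rw [hK, Finset.coe_image] at ha ha'
    obtain ⟨r, -, rfl⟩ := ha
    obtain ⟨s, -, rfl⟩ := ha'
    show ψ r ≠ ψ s ∧ _
    refine ⟨hne, ?_⟩
    show AdjoinRoot.mk _ (u b (r : (ZMod p)[X])) * AdjoinRoot.mk _ (u b (s : (ZMod p)[X])) = 0
    rw [← map_mul, AdjoinRoot.mk_eq_zero]
    refine u_mul_u _ _ (fun h1 h2 => ?_)
    exact hne (by apply congrArg ψ; exact Subtype.ext (h1.trans h2.symm))
  -- upper bound: every clique has at most p^b elements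
  have hub : ∀ s : Finset ↥(zd p (2 * b + 1)), (zdGraph p (2 * b + 1)).IsClique s →
      s.card ≤ p ^ b := by
    intro s hs
    set Φ : ↥(zd p (2 * b + 1)) → (ZMod p)[X] :=
      fun f => if b < mindeg (f : TPR p (2 * b + 1)) then
        canon (f : TPR p (2 * b + 1)) /ₘ X ^ (b + 1) else 0 with hΦ
    set t : Finset (ZMod p)[X] := Finset.univ.image (fun r : D p b => (r : (ZMod p)[X]))
      with ht
    have htcard : t.card = p ^ b := by
      rw [ht, Finset.card_image_of_injective _ Subtype.val_injective,
        Finset.card_univ, card_D]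
    have hmem : ∀ f ∈ s, Φ f ∈ t := by
      intro f _
      rw [hΦ]
      beta_reduce
      split_ifs with h
      · obtain ⟨-, hdeg, -⟩ := high_mindeg_struct f.2.1 h
        exact Finset.mem_image.2 ⟨⟨_, Polynomial.mem_degreeLT.2 hdeg⟩, Finset.mem_univ _, rfl⟩
      · exact Finset.mem_image.2 ⟨⟨0, Polynomial.mem_degreeLT.2 (by
          simpa using WithBot.bot_lt_iff_ne_bot.2 (by simp))⟩, Finset.mem_univ _, rfl⟩
    have hinj : Set.InjOn Φ ↑s := by
      intro f hf g hg hfg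
      by_contra hne
      have hadj : f ≠ g ∧ (f : TPR p (2 * b + 1)) * (g : TPR p (2 * b + 1)) = 0 :=
        hs hf hg hne
      have hmul : 2 * b + 1 ≤ mindeg (f : TPR p (2 * b + 1)) + mindeg (g : TPR p (2 * b + 1)) :=
        (mul_eq_zero_iff_c_le f.2.1 g.2.1).1 hadj.2
      rw [hΦ] at hfg
      beta_reduce at hfg
      by_cases h1 : b < mindeg (f : TPR p (2 * b + 1)) <;>
        by_cases h2 : b < mindeg (g : TPR p (2 * b + 1))
      · rw [if_pos h1, if_pos h2] at hfg
        obtain ⟨he1, -, -⟩ := high_mindeg_struct f.2.1 h1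
        obtain ⟨he2, -, -⟩ := high_mindeg_struct g.2.1 h2
        have : canon (f : TPR p (2 * b + 1)) = canon (g : TPR p (2 * b + 1)) := by
          rw [he1, he2, hfg]
        have : (f : TPR p (2 * b + 1)) = (g : TPR p (2 * b + 1)) := by
          rw [← mk_canon (f : TPR p (2 * b + 1)), ← mk_canon (g : TPR p (2 * b + 1)), this]
        exact hne (Subtype.ext this)
      · rw [if_pos h1, if_neg h2] at hfg
        obtain ⟨-, -, hr0⟩ := high_mindeg_struct f.2.1 h1
        exact hr0 hfg
      · rw [if_neg h1, if_pos h2] at hfg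
        obtain ⟨-, -, hr0⟩ := high_mindeg_struct g.2.1 h2
        exact hr0 hfg.symm
      · omega
    calc s.card ≤ t.card := Finset.card_le_card_of_injOn Φ hmem hinj
      _ = p ^ b := htcard
  refine le_antisymm ?_ ?_
  · obtain ⟨s, hs⟩ := (zdGraph p (2 * b + 1)).exists_isNClique_cliqueNum
    rw [← hs.2]
    exact hub s hs.1
  · rw [← hKcard]
    exact SimpleGraph.IsClique.card_le_cliqueNum (tc := hKclique)
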